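/- (Bounded distortion) Let (X, d) be a compact metric space of diameter diam(X), and let f₁, …, f_N: X → X be contractions with contraction ratios c₁, …, c_N < 1 such that each x ↦ (Df_i)(x) is strictly positive and Hölder continuous with exponent s > 0 and Hölder constant K, with m₊ := min_i inf_x (Df_i)(x) > 0 and (Df_i)(x) < 1 for all x. Then for every finite word w = w₁…wₙ over {1,…,N} and all x, y ∈ X, (Df_w)(x) ≤ (Df_w)(y) · exp(K·diam(X)^s / (m₊(1 − c_max^s))), where f_w = f_{w₁}∘⋯∘f_{wₙ}, c_max = max_i c_i. In particular there is a constant C₁ > 1, independent of w, such that T_w ≤ C₁ R_w, where T_w = sup_x (Df_w)(x) and R_w = inf_x (Df_w)(x). -/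

import Mathlib

open Filter Topology

/-- `f` is an infinitesimal similitude at `x` with value `D`. -/
def IsInfSimAt {X Y : Type*} [MetricSpace X] [MetricSpace Y] (f : X → Y) (x : X) (D : ℝ) : Prop :=
  ∀ u v : ℕ → X, (∀ m, u m ≠ v m) →
    Tendsto u atTop (𝓝 x) → Tendsto v atTop (𝓝 x) →
    Tendsto (fun m => dist (f (u m)) (f (v m)) / dist (u m) (v m)) atTop (𝓝 D)

/-- For a word `w = w₁…wₙ`, `fw f w = f_{w₁} ∘ ⋯ ∘ f_{wₙ}`. -/
def fw {X : Type*} {N : ℕ} (f : Fin N → X → X) : List (Fin N) → X → X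
  | [], x => x
  | i :: w, x => f i (fw f w x)

/-- The infinitesimal similitude of `f_w`, given via the chain rule:
`(Df_w)(x) = ∏ₖ (Df_{wₖ})(f_{w_{k+1}} ∘ ⋯ ∘ f_{wₙ}(x))`. -/
def Dfw {X : Type*} {N : ℕ} (f : Fin N → X → X) (Df : Fin N → X → ℝ) :
    List (Fin N) → X → ℝ
  | [], _ => 1
  | i :: w, x => Df i (fw f w x) * Dfw f Df w x

/-- Bounded distortion: `(Df_w)(x) ≤ (Df_w)(y)·exp(K·diam(X)^s/(m₊(1−c_max^s)))` for all
words `w` and all `x, y`; in particular there is `C₁ > 1`, independent of `w`, with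
`T_w ≤ C₁ R_w`. -/
theorem bounded_distortion {X : Type*} [MetricSpace X] [CompactSpace X] [Nonempty X]
    {N : ℕ} (f : Fin N → X → X) (Df : Fin N → X → ℝ) (c : Fin N → ℝ)
    (cmax s K m : ℝ)
    (hsim : ∀ i x, IsInfSimAt (f i) x (Df i x))
    (hcontr : ∀ i x y, dist (f i x) (f i y) ≤ c i * dist x y)
    (hccmax : ∀ i, c i ≤ cmax) (hcmax0 : 0 ≤ cmax) (hcmax1 : cmax < 1)
    (hs : 0 < s) (hK : 0 ≤ K)
    (hHolder : ∀ i x y, |Df i x - Df i y| ≤ K * dist x y ^ s)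
    (hm : 0 < m) (hmle : ∀ i x, m ≤ Df i x) (hDlt : ∀ i x, Df i x < 1) :
    (∀ (w : List (Fin N)) (x y : X),
        Dfw f Df w x ≤ Dfw f Df w y *
          Real.exp (K * Metric.diam (Set.univ : Set X) ^ s / (m * (1 - cmax ^ s)))) ∧
    ∃ C₁ : ℝ, 1 < C₁ ∧ ∀ w : List (Fin N),
        (⨆ x, Dfw f Df w x) ≤ C₁ * (⨅ x, Dfw f Df w x) := by
  set D := Metric.diam (Set.univ : Set X) with hD
  have hD0 : 0 ≤ D := Metric.diam_nonneg
  set q : ℝ := cmax ^ s with hqdef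
  have hq0 : 0 ≤ q := Real.rpow_nonneg hcmax0 s
  have hq1 : q < 1 := by
    rcases eq_or_lt_of_le hcmax0 with h | h
    · simpa [hqdef, ← h, Real.zero_rpow hs.ne'] using one_pos
    · exact Real.rpow_lt_one hcmax0 hcmax1 hs
  have hq1' : 0 < 1 - q := by linarith
  -- distance contraction for words
  have hdist : ∀ (w : List (Fin N)) (x y : X),
      dist (fw f w x) (fw f w y) ≤ cmax ^ w.length * D := by
    intro w
    induction w with
    | nil =>
        intro x y
        simpa [fw] using
          Metric.dist_le_diam_of_mem (Metric.isBounded_of_compactSpace (s := Set.univ))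
            (Set.mem_univ x) (Set.mem_univ y)
    | cons i w ih =>
        intro x y
        calc dist (fw f (i :: w) x) (fw f (i :: w) y)
            ≤ c i * dist (fw f w x) (fw f w y) := hcontr i _ _
          _ ≤ cmax * dist (fw f w x) (fw f w y) :=
              mul_le_mul_of_nonneg_right (hccmax i) dist_nonneg
          _ ≤ cmax * (cmax ^ w.length * D) :=
              mul_le_mul_of_nonneg_left (ih x y) hcmax0
          _ = cmax ^ (i :: w).length * D := by
              simp only [List.length_cons, pow_succ]; ring
  -- positivity and upper bound of Dfw
  have hpos : ∀ (w : List (Fin N)) (x : X), 0 < Dfw f Df w x := by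
    intro w
    induction w with
    | nil => intro x; simp [Dfw]
    | cons i w ih =>
        intro x
        exact mul_pos (lt_of_lt_of_le hm (hmle i _)) (ih x)
  have hle1 : ∀ (w : List (Fin N)) (x : X), Dfw f Df w x ≤ 1 := by
    intro w
    induction w with
    | nil => intro x; simp [Dfw]
    | cons i w ih =>
        intro x
        calc Dfw f Df (i :: w) x = Df i (fw f w x) * Dfw f Df w x := rfl
          _ ≤ 1 * 1 := mul_le_mul (hDlt i _).le (ih x) (hpos w x).le zero_le_one
          _ = 1 := by ring
  -- main inductive estimate
  have key : ∀ (w : List (Fin N)) (x y : X),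
      Dfw f Df w x ≤ Dfw f Df w y *
        Real.exp ((K * D ^ s / m) * ∑ k ∈ Finset.range w.length, q ^ k) := by
    intro w
    induction w with
    | nil =>
        intro x y
        simp only [Dfw, List.length_nil, Finset.range_zero, Finset.sum_empty, mul_zero,
          Real.exp_zero, mul_one, le_refl]
    | cons i w ih =>
        intro x y
        have hDs : 0 ≤ K * D ^ s / m :=
          div_nonneg (mul_nonneg hK (Real.rpow_nonneg hD0 s)) hm.le
        have hstep : Df i (fw f w x) ≤ Df i (fw f w y) * Real.exp (K * D ^ s / m * q ^ w.length) := by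
          set a := Df i (fw f w x)
          set b := Df i (fw f w y)
          have hb : m ≤ b := hmle i _
          have h1 : a ≤ b + K * dist (fw f w x) (fw f w y) ^ s := by
            have := abs_le.mp (hHolder i (fw f w x) (fw f w y))
            linarith [this.2]
          have h2 : dist (fw f w x) (fw f w y) ^ s ≤ q ^ w.length * D ^ s := by
            have h3 : dist (fw f w x) (fw f w y) ^ s ≤ (cmax ^ w.length * D) ^ s :=
              Real.rpow_le_rpow dist_nonneg (hdist w x y) hs.le
            have h4 : ((cmax ^ w.length : ℝ) * D) ^ s = q ^ w.length * D ^ s := by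
              rw [Real.mul_rpow (pow_nonneg hcmax0 _) hD0, ← Real.rpow_natCast cmax w.length,
                ← Real.rpow_mul hcmax0, mul_comm (w.length : ℝ) s, Real.rpow_mul hcmax0,
                Real.rpow_natCast]
            rw [h4] at h3; exact h3
          set t : ℝ := K * D ^ s / m * q ^ w.length with ht
          have ht0 : 0 ≤ t := mul_nonneg hDs (pow_nonneg hq0 _)
          have h5 : a ≤ b * (1 + t) := by
            have : K * (q ^ w.length * D ^ s) ≤ b * t := by
              rw [ht]
              have : m * (K * D ^ s / m * q ^ w.length) = K * (q ^ w.length * D ^ s) := by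
                field_simp
              nlinarith [mul_le_mul_of_nonneg_right hb (mul_nonneg hDs (pow_nonneg hq0 w.length))]
            have h6 : K * dist (fw f w x) (fw f w y) ^ s ≤ K * (q ^ w.length * D ^ s) :=
              mul_le_mul_of_nonneg_left h2 hK
            nlinarith
          calc a ≤ b * (1 + t) := h5
            _ ≤ b * Real.exp t := by
                have := Real.add_one_le_exp t
                nlinarith [lt_of_lt_of_le hm hb]
        calc Dfw f Df (i :: w) x = Df i (fw f w x) * Dfw f Df w x := rfl
          _ ≤ (Df i (fw f w y) * Real.exp (K * D ^ s / m * q ^ w.length)) *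
              (Dfw f Df w y * Real.exp ((K * D ^ s / m) * ∑ k ∈ Finset.range w.length, q ^ k)) := by
              exact mul_le_mul hstep (ih x y) (hpos w x).le
                (mul_nonneg (lt_of_lt_of_le hm (hmle i _)).le (Real.exp_pos _).le)
          _ = Dfw f Df (i :: w) y *
              Real.exp ((K * D ^ s / m) * ∑ k ∈ Finset.range (i :: w).length, q ^ k) := by
              rw [List.length_cons, Finset.sum_range_succ]
              rw [show Dfw f Df (i :: w) y = Df i (fw f w y) * Dfw f Df w y from rfl]
              rw [mul_add, Real.exp_add]
              ring
  -- geometric sum bound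
  have hsum : ∀ n : ℕ, (∑ k ∈ Finset.range n, q ^ k) ≤ (1 - q)⁻¹ := by
    intro n
    have h := geom_sum_eq (ne_of_lt hq1) n
    rw [h, div_le_iff_of_neg (by linarith : q - 1 < 0)]
    have hqn : 0 ≤ q ^ n := pow_nonneg hq0 n
    have h2 : (1 - q)⁻¹ * (q - 1) = -1 := by field_simp; ring
    linarith
  set E : ℝ := K * D ^ s / (m * (1 - q)) with hE
  have hDs : 0 ≤ K * D ^ s / m :=
    div_nonneg (mul_nonneg hK (Real.rpow_nonneg hD0 s)) hm.le
  have hE0 : 0 ≤ E := by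
    apply div_nonneg (mul_nonneg hK (Real.rpow_nonneg hD0 s))
    positivity
  have main : ∀ (w : List (Fin N)) (x y : X),
      Dfw f Df w x ≤ Dfw f Df w y * Real.exp E := by
    intro w x y
    refine (key w x y).trans (mul_le_mul_of_nonneg_left ?_ (hpos w y).le)
    apply Real.exp_le_exp.mpr
    calc (K * D ^ s / m) * ∑ k ∈ Finset.range w.length, q ^ k
        ≤ (K * D ^ s / m) * (1 - q)⁻¹ :=
          mul_le_mul_of_nonneg_left (hsum w.length) hDs
      _ = E := by
          rw [hE]
          field_simp
  constructor
  · exact main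
  · refine ⟨Real.exp E + 1, by nlinarith [Real.one_le_exp hE0], fun w => ?_⟩
    have hbdd : BddAbove (Set.range fun x => Dfw f Df w x) := ⟨1, by rintro _ ⟨x, rfl⟩; exact hle1 w x⟩
    have hinf0 : 0 ≤ ⨅ x, Dfw f Df w x := le_ciInf fun x => (hpos w x).le
    apply ciSup_le
    intro x
    have h1 : Dfw f Df w x / Real.exp E ≤ ⨅ y, Dfw f Df w y := by
      apply le_ciInf
      intro y
      rw [div_le_iff₀ (Real.exp_pos E)]
      exact main w x y
    have h2 : Dfw f Df w x ≤ Real.exp E * ⨅ y, Dfw f Df w y := by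
      rw [div_le_iff₀ (Real.exp_pos E)] at h1
      linarith [h1]
    nlinarith [h2]
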